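/- Let a_0 ∈ ℤ, let (b_i)_{i≥1} be a sequence of integers with b_i ≥ 2, and let (a_i)_{i≥1} be a sequence of integers with 0 ≤ a_i ≤ b_i − 1 for all i. Set x = a_0 + Σ_{i=1}^∞ a_i/(b_1·b_2⋯b_i). If a_i > 0 for infinitely many i, and there exists a strictly increasing sequence (i_n) of indices such that a_{i_n}/b_{i_n} → 0 and b_{i_n} → ∞ as n → ∞, then x is irrational. -/

import Mathlib

open Filter

noncomputable section

namespace CantorOppenheim

/-- The partial base product `b_{n+1} ⋯ b_{n+N}`. -/
def Q (b : ℕ → ℤ) (n N : ℕ) : ℝ := ∏ k ∈ Finset.range N, (b (n + 1 + k) : ℝ)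

/-- The `i`-th term of the `n`-th tail. -/
def c (a b : ℕ → ℤ) (n i : ℕ) : ℝ := (a (n + 1 + i) : ℝ) / Q b n (i + 1)

/-- The `n`-th tail `T n = ∑_{i ≥ 0} a_{n+1+i} / (b_{n+1} ⋯ b_{n+1+i})`. -/
def T (a b : ℕ → ℤ) (n : ℕ) : ℝ := ∑' i, c a b n i

variable {a b : ℕ → ℤ}

lemma hb2 (hb : ∀ i : ℕ, 1 ≤ i → 2 ≤ b i) (n k : ℕ) : (2 : ℝ) ≤ (b (n + 1 + k) : ℝ) := by
  have := hb (n + 1 + k) (by omega)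
  exact_mod_cast this

lemma Q_pos (hb : ∀ i : ℕ, 1 ≤ i → 2 ≤ b i) (n N : ℕ) : 0 < Q b n N :=
  Finset.prod_pos fun k _ => lt_of_lt_of_le (by norm_num) (hb2 hb n k)

lemma Q_ge (hb : ∀ i : ℕ, 1 ≤ i → 2 ≤ b i) (n N : ℕ) : (2 : ℝ) ^ N ≤ Q b n N := by
  have h : ∏ _k ∈ Finset.range N, (2 : ℝ) ≤ Q b n N :=
    Finset.prod_le_prod (fun _ _ => by norm_num) (fun k _ => hb2 hb n k)
  simpa using h

lemma Q_succ (n N : ℕ) : Q b n (N + 1) = Q b n N * (b (n + 1 + N) : ℝ) :=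
  Finset.prod_range_succ _ _

lemma Q_succ' (n N : ℕ) : Q b n (N + 1) = (b (n + 1) : ℝ) * Q b (n + 1) N := by
  rw [Q, Finset.prod_range_succ', add_zero, mul_comm]
  congr 1
  apply Finset.prod_congr rfl
  intro k _
  have h : n + 1 + (k + 1) = n + 1 + 1 + k := by omega
  rw [h]

lemma c_nonneg (hb : ∀ i : ℕ, 1 ≤ i → 2 ≤ b i)
    (ha : ∀ i : ℕ, 1 ≤ i → 0 ≤ a i ∧ a i ≤ b i - 1) (n i : ℕ) : 0 ≤ c a b n i := by
  apply div_nonneg _ (Q_pos hb n (i + 1)).le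
  have := (ha (n + 1 + i) (by omega)).1
  exact_mod_cast this

lemma c_le_geom (hb : ∀ i : ℕ, 1 ≤ i → 2 ≤ b i)
    (ha : ∀ i : ℕ, 1 ≤ i → 0 ≤ a i ∧ a i ≤ b i - 1) (n i : ℕ) :
    c a b n i ≤ (1 / 2 : ℝ) ^ i := by
  have hbpos : (0 : ℝ) < (b (n + 1 + i) : ℝ) := lt_of_lt_of_le (by norm_num) (hb2 hb n i)
  have hQpos := Q_pos hb n i
  have hanum : (a (n + 1 + i) : ℝ) ≤ (b (n + 1 + i) : ℝ) := by
    have h := (ha (n + 1 + i) (by omega)).2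
    have h' : a (n + 1 + i) ≤ b (n + 1 + i) := by omega
    exact_mod_cast h'
  have h1 : c a b n i ≤ (b (n + 1 + i) : ℝ) / Q b n (i + 1) := by
    rw [c]
    gcongr
    exact (Q_pos hb n (i + 1)).le
  have h2 : (b (n + 1 + i) : ℝ) / Q b n (i + 1) = 1 / Q b n i := by
    rw [Q_succ, mul_comm, div_mul_eq_div_div, div_self hbpos.ne']
  calc c a b n i ≤ 1 / Q b n i := by rw [← h2]; exact h1
    _ ≤ (1 / 2 : ℝ) ^ i := by
        rw [div_pow, one_pow]
        gcongr
        exact Q_ge hb n i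

lemma summable_c (hb : ∀ i : ℕ, 1 ≤ i → 2 ≤ b i)
    (ha : ∀ i : ℕ, 1 ≤ i → 0 ≤ a i ∧ a i ≤ b i - 1) (n : ℕ) : Summable (c a b n) :=
  Summable.of_nonneg_of_le (c_nonneg hb ha n) (c_le_geom hb ha n) summable_geometric_two

lemma c_zero (n : ℕ) : c a b n 0 = (a (n + 1) : ℝ) / (b (n + 1) : ℝ) := by
  simp [c, Q]

lemma c_succ (n i : ℕ) :
    c a b n (i + 1) = c a b (n + 1) i / (b (n + 1) : ℝ) := by
  have h1 : n + 1 + (i + 1) = n + 1 + 1 + i := by omega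
  rw [c, c, h1, Q_succ', div_div, mul_comm]

lemma T_rec (hb : ∀ i : ℕ, 1 ≤ i → 2 ≤ b i)
    (ha : ∀ i : ℕ, 1 ≤ i → 0 ≤ a i ∧ a i ≤ b i - 1) (n : ℕ) :
    T a b n = (a (n + 1) : ℝ) / (b (n + 1) : ℝ) + T a b (n + 1) / (b (n + 1) : ℝ) := by
  rw [T, Summable.tsum_eq_zero_add (summable_c hb ha n), c_zero]
  congr 1
  rw [T, ← tsum_div_const]
  exact tsum_congr fun i => c_succ n i

lemma sum_c_le (hb : ∀ i : ℕ, 1 ≤ i → 2 ≤ b i)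
    (ha : ∀ i : ℕ, 1 ≤ i → 0 ≤ a i ∧ a i ≤ b i - 1) (n N : ℕ) :
    ∑ i ∈ Finset.range N, c a b n i ≤ 1 - 1 / Q b n N := by
  induction N with
  | zero => simp [Q]
  | succ N ih =>
    rw [Finset.sum_range_succ]
    have hQN := Q_pos hb n N
    have hQN1 := Q_pos hb n (N + 1)
    have hbpos : (0 : ℝ) < (b (n + 1 + N) : ℝ) := lt_of_lt_of_le (by norm_num) (hb2 hb n N)
    have hc : c a b n N ≤ 1 / Q b n N - 1 / Q b n (N + 1) := by
      have hanum : (a (n + 1 + N) : ℝ) ≤ (b (n + 1 + N) : ℝ) - 1 := by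
        have h := (ha (n + 1 + N) (by omega)).2
        have h' : (a (n + 1 + N) : ℝ) ≤ ((b (n + 1 + N) - 1 : ℤ) : ℝ) := by exact_mod_cast h
        push_cast at h'; linarith
      have hle : c a b n N ≤ ((b (n + 1 + N) : ℝ) - 1) / Q b n (N + 1) := by
        rw [c]; gcongr
      refine hle.trans (le_of_eq ?_)
      rw [Q_succ]
      field_simp
      try ring
    linarith

lemma T_le_one (hb : ∀ i : ℕ, 1 ≤ i → 2 ≤ b i)
    (ha : ∀ i : ℕ, 1 ≤ i → 0 ≤ a i ∧ a i ≤ b i - 1) (n : ℕ) : T a b n ≤ 1 := by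
  apply Real.tsum_le_of_sum_range_le (c_nonneg hb ha n)
  intro N
  have hQ := Q_pos hb n N
  have h1 : 0 < 1 / Q b n N := by positivity
  linarith [sum_c_le hb ha n N]

lemma T_pos (hb : ∀ i : ℕ, 1 ≤ i → 2 ≤ b i)
    (ha : ∀ i : ℕ, 1 ≤ i → 0 ≤ a i ∧ a i ≤ b i - 1)
    (hinf : {i : ℕ | 1 ≤ i ∧ 0 < a i}.Infinite) (n : ℕ) : 0 < T a b n := by
  obtain ⟨m, hm, hmn⟩ := hinf.exists_gt (n + 1)
  refine Summable.tsum_pos (summable_c hb ha n) (c_nonneg hb ha n) (m - (n + 1)) ?_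
  have hme : n + 1 + (m - (n + 1)) = m := by omega
  rw [c, hme]
  apply div_pos _ (Q_pos hb n _)
  exact_mod_cast hm.2

/-- The key integrality: `T n = (b₁ ⋯ b_n) * T 0 - (integer)`. -/
lemma T_eq (hb : ∀ i : ℕ, 1 ≤ i → 2 ≤ b i)
    (ha : ∀ i : ℕ, 1 ≤ i → 0 ≤ a i ∧ a i ≤ b i - 1) (n : ℕ) :
    ∃ A : ℤ, T a b n = (∏ k ∈ Finset.range n, (b (k + 1) : ℝ)) * T a b 0 - (A : ℝ) := by
  induction n with
  | zero => exact ⟨0, by simp⟩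
  | succ n ih =>
    obtain ⟨A, hA⟩ := ih
    refine ⟨b (n + 1) * A + a (n + 1), ?_⟩
    have hbpos : (0 : ℝ) < (b (n + 1) : ℝ) := by
      have := hb (n + 1) (by omega); positivity
    have hrec := T_rec hb ha n
    have hstep : T a b (n + 1) = (b (n + 1) : ℝ) * T a b n - (a (n + 1) : ℝ) := by
      field_simp at hrec
      linarith
    rw [hstep, hA, Finset.prod_range_succ]
    push_cast
    ring

lemma prod_Icc_range (f : ℕ → ℝ) (n : ℕ) :
    ∏ j ∈ Finset.Icc 1 n, f j = ∏ k ∈ Finset.range n, f (k + 1) := by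
  induction n with
  | zero => simp
  | succ n ih => rw [Finset.prod_Icc_succ_top (by omega), ih, Finset.prod_range_succ]

end CantorOppenheim

open CantorOppenheim in
/-- Oppenheim's criterion: a Cantor series
`x = a₀ + ∑_{i≥1} a_i / (b₁ ⋯ b_i)` with integer digits `0 ≤ a_i ≤ b_i - 1` and
integer bases `b_i ≥ 2` is irrational provided that `a_i > 0` infinitely often
and `a_{iₙ} / b_{iₙ} → 0` while `b_{iₙ} → ∞` along some strictly increasing
sequence of indices `(iₙ)`. -/
theorem cantor_series_irrational_of_ratio_tendsto_zero
    (a b : ℕ → ℤ)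
    (hb : ∀ i : ℕ, 1 ≤ i → 2 ≤ b i)
    (ha : ∀ i : ℕ, 1 ≤ i → 0 ≤ a i ∧ a i ≤ b i - 1)
    (x : ℝ)
    (hx : x = (a 0 : ℝ) +
      ∑' i : ℕ, (a (i + 1) : ℝ) / ∏ j ∈ Finset.Icc 1 (i + 1), (b j : ℝ))
    (hinf : {i : ℕ | 1 ≤ i ∧ 0 < a i}.Infinite)
    (idx : ℕ → ℕ) (hidx1 : ∀ n : ℕ, 1 ≤ idx n) (hmono : StrictMono idx)
    (hlim : Filter.Tendsto (fun n : ℕ => (a (idx n) : ℝ) / (b (idx n) : ℝ))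
      Filter.atTop (nhds 0))
    (hblim : Filter.Tendsto (fun n : ℕ => (b (idx n) : ℝ))
      Filter.atTop Filter.atTop) :
    Irrational x := by
  have h0 : ∀ k : ℕ, 0 + 1 + k = k + 1 := fun k => by omega
  -- rewrite x = a 0 + T 0
  have hxT : x = (a 0 : ℝ) + T a b 0 := by
    rw [hx]
    congr 1
    apply tsum_congr
    intro i
    rw [c, Q]
    simp only [h0]
    rw [prod_Icc_range]
  rintro ⟨r, hr⟩
  -- q * T 0 is an integer
  set q : ℤ := (r.den : ℤ) with hq
  have hqpos : (0 : ℝ) < (q : ℝ) := by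
    have := r.pos
    positivity
  have hqT0 : ((q : ℝ)) * T a b 0 = ((r.num - q * a 0 : ℤ) : ℝ) := by
    have hT0 : T a b 0 = x - (a 0 : ℝ) := by rw [hxT]; ring
    have hden : ((q : ℝ)) * x = (r.num : ℝ) := by
      rw [← hr, hq]
      push_cast
      rw [Rat.cast_def]
      field_simp
    rw [hT0]
    push_cast
    rw [mul_sub, hden]
    try ring
  -- hence q * T n is an integer for all n; since T n > 0, T n ≥ 1/q
  have hTlb : ∀ n : ℕ, 1 / (q : ℝ) ≤ T a b n := by
    intro n
    obtain ⟨A, hA⟩ := T_eq hb ha n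
    have hint : ((q : ℝ)) * T a b n =
        (((∏ k ∈ Finset.range n, b (k + 1)) * (r.num - q * a 0) - q * A : ℤ) : ℝ) := by
      rw [hA, mul_sub, ← mul_assoc, mul_comm ((q : ℝ)), mul_assoc, hqT0]
      push_cast
      ring
    set B : ℤ := (∏ k ∈ Finset.range n, b (k + 1)) * (r.num - q * a 0) - q * A
    have hpos : 0 < ((q : ℝ)) * T a b n := mul_pos hqpos (T_pos hb ha hinf n)
    have hB1 : (1 : ℤ) ≤ B := by
      rw [hint] at hpos
      exact_mod_cast hpos
    have hge : (1 : ℝ) ≤ ((q : ℝ)) * T a b n := by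
      rw [hint]; exact_mod_cast hB1
    rw [div_le_iff₀ hqpos]
    linarith [mul_comm ((q : ℝ)) (T a b n)]
  -- but T (idx m - 1) → 0
  have hub : ∀ m : ℕ, T a b (idx m - 1) ≤
      (a (idx m) : ℝ) / (b (idx m) : ℝ) + 1 / (b (idx m) : ℝ) := by
    intro m
    have h1 : idx m - 1 + 1 = idx m := by have := hidx1 m; omega
    have hrec := T_rec hb ha (idx m - 1)
    rw [h1] at hrec
    have hbpos : (0 : ℝ) < (b (idx m) : ℝ) := by
      have := hb (idx m) (hidx1 m); positivity
    have hT1 : T a b (idx m) / (b (idx m) : ℝ) ≤ 1 / (b (idx m) : ℝ) := by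
      gcongr
      exact T_le_one hb ha _
    rw [hrec]
    linarith
  have hlim2 : Filter.Tendsto
      (fun m : ℕ => (a (idx m) : ℝ) / (b (idx m) : ℝ) + 1 / (b (idx m) : ℝ))
      Filter.atTop (nhds 0) := by
    have h2 : Filter.Tendsto (fun m : ℕ => 1 / (b (idx m) : ℝ)) Filter.atTop (nhds 0) := by
      simpa [Pi.inv_def] using hblim.inv_tendsto_atTop
    simpa using hlim.add h2
  have hev : ∀ᶠ m in Filter.atTop,
      (a (idx m) : ℝ) / (b (idx m) : ℝ) + 1 / (b (idx m) : ℝ) < 1 / (q : ℝ) :=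
    hlim2.eventually (gt_mem_nhds (by positivity))
  obtain ⟨m, hm⟩ := hev.exists
  have := (hTlb (idx m - 1)).trans (hub m)
  linarith
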